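/- arXiv:1912.03140 — 2 statements merged into one kernel-verified Lean document; each statement's English description precedes it below -/
import Mathlib

section
/- Let A_d, B_d, K_d, P, Q_d be real matrices with P symmetric positive definite and Q_d symmetric positive definite, satisfying the discrete-time Lyapunov equation (A_d + B_dK_d)ᵀP(A_d + B_dK_d) − P + Q_d = 0. Set Ã := A_d + B_dK_d. Then (Ã − I)ᵀP + P(Ã − I) ⪯ −Q_d in the Loewner order. -/
open Matrix

theorem discrete_to_continuous_lyapunov (n m : ℕ)
    (Ad : Matrix (Fin n) (Fin n) ℝ) (Bd : Matrix (Fin n) (Fin m) ℝ)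
    (Kd : Matrix (Fin m) (Fin n) ℝ) (P Qd : Matrix (Fin n) (Fin n) ℝ)
    (hP : P.PosDef) (hQ : Qd.PosDef)
    (hLyap : (Ad + Bd * Kd)ᵀ * P * (Ad + Bd * Kd) - P + Qd = 0) :
    ((-Qd) - (((Ad + Bd * Kd) - 1)ᵀ * P + P * ((Ad + Bd * Kd) - 1))).PosSemidef := by
  set A := Ad + Bd * Kd
  have hQd : Qd = P - Aᵀ * P * A := by
    have := hLyap
    linear_combination (norm := noncomm_ring) this
  have hkey : (-Qd) - ((A - 1)ᵀ * P + P * (A - 1)) = (A - 1)ᵀ * P * (A - 1) := by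
    rw [hQd]
    simp only [transpose_sub, transpose_one]
    noncomm_ring
  rw [hkey]
  have := hP.posSemidef.conjTranspose_mul_mul_same (A - 1)
  simpa [conjTranspose_eq_transpose_of_trivial, Matrix.map_id] using this
end

section
/- Let ā, μ, γ̂ > 0 and 0 < κ̂ < 1, σ, θ ≥ 0, and for T > 0 define the matrix A(T) = [[√(1 − Tā), √(Tμ)], [Tγ̂, κ̂(1 + Tσθ)]]. Then there exists T₀ > 0 such that for all 0 < T < T₀, both eigenvalues of A(T) have modulus strictly less than 1. -/
open Matrix

set_option maxHeartbeats 1000000 in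
theorem aux_matrix_eigenvalues_small (a μ γ κ σ θ : ℝ)
    (ha : 0 < a) (hμ : 0 < μ) (hγ : 0 < γ) (hκ0 : 0 < κ) (hκ1 : κ < 1)
    (hσ : 0 ≤ σ) (hθ : 0 ≤ θ) :
    ∃ T₀ > 0, ∀ T : ℝ, 0 < T → T < T₀ →
      ∀ lam : ℂ,
        lam ^ 2
            - ((Matrix.trace
                (!![Real.sqrt (1 - T * a), Real.sqrt (T * μ);
                    T * γ, κ * (1 + T * σ * θ)]) : ℝ) : ℂ) * lam
            + (((!![Real.sqrt (1 - T * a), Real.sqrt (T * μ);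
                    T * γ, κ * (1 + T * σ * θ)]).det : ℝ) : ℂ) = 0 →
          ‖lam‖ < 1 := by
  have hκσθ : 0 < 2 * κ * (σ * θ + 1) := by positivity
  have hκ' : 0 < 1 - κ := by linarith
  refine ⟨min (min (1/(2*a)) ((1-κ)/(2*κ*(σ*θ+1)))) ((1-κ)^2*a^2/(32*γ^2*μ)), ?_, ?_⟩
  · have h1 : 0 < 1/(2*a) := by positivity
    have h2 : 0 < (1-κ)/(2*κ*(σ*θ+1)) := div_pos hκ' hκσθ
    have h3 : 0 < (1-κ)^2*a^2/(32*γ^2*μ) := by positivity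
    simp only [lt_min_iff]
    exact ⟨⟨h1, h2⟩, h3⟩
  · intro T hT hT'
    obtain ⟨hTa', hTb⟩ := lt_min_iff.mp hT'
    obtain ⟨hT1, hT2⟩ := lt_min_iff.mp hTa'
    rw [lt_div_iff₀ (by positivity : (0:ℝ) < 2*a)] at hT1
    rw [lt_div_iff₀ hκσθ] at hT2
    rw [lt_div_iff₀ (by positivity : (0:ℝ) < 32*γ^2*μ)] at hTb
    clear hT' hTa'
    have hTa : T * a < 1/2 := by
      have h : T*(2*a) = 2*(T*a) := by ring
      linarith [hT1, h.symm.trans_lt hT1]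
    have hTk : κ * (T * σ * θ) + κ * T < (1-κ)/2 := by
      have h : T*(2*κ*(σ*θ+1)) = 2*(κ*(T*σ*θ)) + 2*(κ*T) := by ring
      rw [h] at hT2
      linarith
    -- square roots
    have hs2 : Real.sqrt (1 - T * a) ^ 2 = 1 - T*a := Real.sq_sqrt (by linarith)
    have hs0 : 0 < Real.sqrt (1 - T * a) := Real.sqrt_pos.mpr (by linarith)
    have hv2 : Real.sqrt (T * μ) ^ 2 = T*μ := Real.sq_sqrt (by positivity)
    have hv0 : 0 < Real.sqrt (T * μ) := Real.sqrt_pos.mpr (by positivity)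
    set s := Real.sqrt (1 - T * a) with hs_def
    set v := Real.sqrt (T * μ) with hv_def
    have hsle : s ≤ 1 - T*a/2 := by
      have h1 : 1 - T*a ≤ (1 - T*a/2)^2 := by
        have he : (1 - T*a/2)^2 = 1 - T*a + (T*a)^2/4 := by ring
        rw [he]
        have := sq_nonneg (T*a)
        linarith
      calc s ≤ Real.sqrt ((1 - T*a/2)^2) := Real.sqrt_le_sqrt h1
        _ = |1 - T*a/2| := Real.sqrt_sq_eq_abs _
        _ = 1 - T*a/2 := abs_of_nonneg (by linarith)
    have hs1 : s < 1 := by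
      have h0 : 0 < T*a := mul_pos hT ha
      linarith
    have hvlt : γ * v < (1-κ)*a/4 := by
      have hc : 0 < (1-κ)*a/(4*γ) := by positivity
      have hv' : v < (1-κ)*a/(4*γ) := by
        rw [hv_def, show ((1-κ)*a/(4*γ)) = ((1-κ)*a)/(4*γ) from rfl]
        rw [Real.sqrt_lt' (by positivity)]
        rw [div_pow, lt_div_iff₀ (by positivity : (0:ℝ) < (4*γ)^2)]
        have e1 : T*μ*(4*γ)^2 = 16*(γ^2*(T*μ)) := by ring
        have e2 : T*(32*γ^2*μ) = 32*(γ^2*(T*μ)) := by ring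
        have e3 : (1-κ)^2*a^2 = ((1-κ)*a)^2 := by ring
        have hpos : 0 < γ^2*(T*μ) := by positivity
        rw [e2, e3] at hTb
        rw [e1]
        linarith
      have h5 := mul_lt_mul_of_pos_left hv' hγ
      have h6 : γ*((1-κ)*a/(4*γ)) = (1-κ)*a/4 := by
        field_simp
      rw [h6] at h5
      exact h5
    set k := κ * (1 + T * σ * θ) with hk_def
    have hk0 : 0 < k := by
      have h0 : 0 ≤ T * σ * θ := by positivity
      have : 0 < 1 + T * σ * θ := by linarith
      exact mul_pos hκ0 this
    have hk1 : 1 - k > (1-κ)/2 := by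
      have h : k = κ + κ * (T*σ*θ) := by ring
      have h2 : 0 ≤ κ * T := by positivity
      rw [h]
      linarith
    have hklt1 : k < 1 := by linarith
    have hvTγ : 0 < v * (T * γ) := by positivity
    have hvTγ' : v * (T * γ) < (T*a/2) * ((1-κ)/2) := by
      calc v * (T * γ) = T * (γ * v) := by ring
        _ < T * ((1-κ)*a/4) := by exact mul_lt_mul_of_pos_left hvlt hT
        _ = (T*a/2) * ((1-κ)/2) := by ring
    have hsk1 : s * k < 1 := by
      calc s * k < 1 * 1 := mul_lt_mul'' hs1 hklt1 hs0.le hk0.le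
        _ = 1 := by ring
    have hsk0 : 0 < s * k := mul_pos hs0 hk0
    have h18 : (T*a/2) * ((1-κ)/2) < 1 := by
      have : (T*a/2) * ((1-κ)/2) < (1/4) * (1/2) :=
        mul_lt_mul'' (by linarith) (by linarith) (by positivity) (by positivity)
      linarith
    have hmm : (T*a/2) * ((1-κ)/2) ≤ (1 - s) * (1 - k) :=
      mul_le_mul (by linarith) (by linarith) (by positivity) (by linarith)
    -- the three Jury conditions
    set t : ℝ := s + k with ht_def
    set d : ℝ := s * k - v * (T * γ) with hd_def
    have hp1 : 1 - t + d > 0 := by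
      have expand : 1 - t + d = (1-s)*(1-k) - v*(T*γ) := by rw [ht_def, hd_def]; ring
      rw [expand]; linarith
    have hp2 : 1 + t + d > 0 := by
      have : 1 + t + d = 1 + s + k + (s*k - v*(T*γ)) := by rw [ht_def, hd_def]; ring
      rw [this]; linarith
    have hd1 : d < 1 := by rw [hd_def]; linarith
    intro lam heq
    have htr : (!![s, v; T * γ, k]).trace = t := by
      rw [Matrix.trace_fin_two_of]
    have hdet : (!![s, v; T * γ, k]).det = d := by
      rw [Matrix.det_fin_two_of]
    rw [htr, hdet] at heq
    -- extract real and imaginary parts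
    set x := lam.re with hx_def
    set y := lam.im with hy_def
    have hre : x*x - y*y - t*x + d = 0 := by
      have h := congrArg Complex.re heq
      simp [pow_two, Complex.mul_re, Complex.mul_im] at h
      linarith [h]
    have him : x*y + y*x - t*y = 0 := by
      have h := congrArg Complex.im heq
      simp [pow_two, Complex.mul_re, Complex.mul_im] at h
      linarith [h]
    have habs : ‖lam‖^2 = x^2 + y^2 := by
      rw [Complex.sq_norm, Complex.normSq_apply]
      ring
    have hgoal : x^2 + y^2 < 1 := by
      by_cases hy : y = 0
      · rw [hy]
        have hre' : x*x - t*x + d = 0 := by rw [hy] at hre; linarith [hre]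
        have hd' : d = x*(t-x) := by linear_combination hre'
        have hx1 : x < 1 := by
          by_contra hcon
          push_neg at hcon
          have e1 : (1-x) * (1-t+x) = 1-t+d := by linear_combination -hre'
          have e1' : (1-x) * (1-t+x) > 0 := by rw [e1]; exact hp1
          have e2 : 1-t+x < 0 := by
            by_contra h2
            push_neg at h2
            have := mul_nonpos_of_nonpos_of_nonneg (by linarith : 1-x ≤ 0) h2
            linarith
          have e3 : 1 < x := by
            by_contra h3
            push_neg at h3
            have hx1' : x = 1 := le_antisymm h3 hcon
            rw [hx1'] at e1'
            simp at e1'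
          have e4 : 1 < t - x := by linarith
          have : 1 * 1 < x * (t-x) :=
            mul_lt_mul'' e3 e4 (by norm_num) (by norm_num)
          rw [← hd'] at this
          linarith
        have hx2 : -1 < x := by
          by_contra hcon
          push_neg at hcon
          have e1 : (1+x) * (1+t-x) = 1+t+d := by linear_combination -hre'
          have e1' : (1+x) * (1+t-x) > 0 := by rw [e1]; exact hp2
          have e2 : 1+t-x < 0 := by
            by_contra h2
            push_neg at h2
            have := mul_nonpos_of_nonpos_of_nonneg (by linarith : 1+x ≤ 0) h2
            linarith
          have e3 : 1 < -x := by
            by_contra h3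
            push_neg at h3
            have hx1' : x = -1 := le_antisymm hcon (by linarith)
            rw [hx1'] at e1'
            simp at e1'
          have e4 : 1 < -(t - x) := by linarith
          have : 1 * 1 < (-x) * (-(t-x)) :=
            mul_lt_mul'' e3 e4 (by norm_num) (by norm_num)
          have h5 : (-x) * (-(t-x)) = x*(t-x) := by ring
          rw [h5, ← hd'] at this
          linarith
        have : x^2 < 1 := by
          have := abs_lt.mpr ⟨hx2, hx1⟩
          calc x^2 = |x|^2 := (sq_abs x).symm
            _ < 1^2 := by
                apply pow_lt_pow_left₀ this (abs_nonneg x)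
                norm_num
            _ = 1 := one_pow 2
        calc x^2 + 0^2 = x^2 := by ring
          _ < 1 := this
      · have h5 : (2*x - t) * y = 0 := by linear_combination him
        have hxt : 2*x = t := by
          rcases mul_eq_zero.mp h5 with h | h
          · linarith
          · exact absurd h hy
        have hsum : x^2 + y^2 = d := by linear_combination -hre + x*hxt
        linarith
    have h9 : ‖lam‖^2 < 1^2 := by rw [habs, one_pow]; exact hgoal
    exact lt_of_pow_lt_pow_left₀ 2 zero_le_one h9
end
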